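/- Let n ≥ 3 and suppose S ∈ ℤ^{n+1} satisfies Q(S,S) = −2, Q(S, D₂) = 0, and c₁(S) = 0. Then either there exist an index j with 2 ≤ j ≤ n−1 and a sign ε ∈ {+1,−1} such that S = ε(H − E₁ − E_j − E_n), or there exist distinct indices j, r with 2 ≤ j, r ≤ n−1 such that S = E_j − E_r. -/

import Mathlib

open Finset
open Fin.NatCast

/-- The class of the line `H` in `H₂(Xₙ;ℤ) ≅ ℤ^{n+1}` (coordinate `0`). -/
def Hv (n : ℕ) : Fin (n + 1) → ℤ := Pi.single 0 1

/-- The exceptional class `E_j` in `H₂(Xₙ;ℤ) ≅ ℤ^{n+1}` (coordinate `j`, for `1 ≤ j ≤ n`). -/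
def Ev (n : ℕ) (j : ℕ) : Fin (n + 1) → ℤ := Pi.single (j : Fin (n + 1)) 1

/-- The intersection form of `Xₙ = ℂP² # n ℂP²‾`: `Q(H,H) = 1`, `Q(E_j,E_j) = -1`,
distinct basis vectors orthogonal. -/
def Qf (n : ℕ) (x y : Fin (n + 1) → ℤ) : ℤ :=
  x 0 * y 0 - ∑ j ∈ Finset.Icc 1 n, x (j : Fin (n + 1)) * y (j : Fin (n + 1))

/-- Pairing with the first Chern class: `c₁(x₀H + Σ x_j E_j) = 3x₀ + Σ x_j`. -/
def c₁ (n : ℕ) (x : Fin (n + 1) → ℤ) : ℤ :=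
  3 * x 0 + ∑ j ∈ Finset.Icc 1 n, x (j : Fin (n + 1))

/-- The class `D₂ = 3H - 2E₁ - Eₙ`. -/
def D₂ (n : ℕ) : Fin (n + 1) → ℤ := 3 • Hv n - 2 • Ev n 1 - Ev n n


private lemma abs_le_sq' (x : ℤ) : |x| ≤ x * x := by
  rcases le_or_gt 1 x with h | h
  · rw [abs_of_nonneg (by omega)]; nlinarith
  · rcases le_or_gt x (-1) with h' | h'
    · rw [abs_of_nonpos (by omega)]; nlinarith
    · have hx : x = 0 := by omega
      simp [hx]

private lemma sum_sq_key (T : Finset ℕ) (f : ℕ → ℤ) (j : ℕ) (hj : j ∈ T)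
    (hsum : ∑ k ∈ T, f k * f k ≤ f j * f j) :
    ∀ k ∈ T, k ≠ j → f k = 0 := by
  intro k hk hkj
  have h1 : ∑ m ∈ T.erase j, f m * f m = ∑ m ∈ T, f m * f m - f j * f j :=
    Finset.sum_erase_eq_sub hj
  have h3 : f k * f k ≤ 0 := by
    have hle := Finset.single_le_sum (f := fun m => f m * f m)
      (fun m _ => mul_self_nonneg (f m)) (Finset.mem_erase.mpr ⟨hkj, hk⟩)
    linarith
  nlinarith [mul_self_nonneg (f k)]

private lemma sq_sum_one (T : Finset ℕ) (f : ℕ → ℤ)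
    (h1 : ∑ j ∈ T, f j = -1) (h2 : ∑ j ∈ T, f j * f j = 1) :
    ∃ j ∈ T, f j = -1 ∧ ∀ k ∈ T, k ≠ j → f k = 0 := by
  obtain ⟨j, hj, hfj⟩ : ∃ j ∈ T, f j ≠ 0 := by
    by_contra h
    push_neg at h
    have : ∑ j ∈ T, f j = 0 := Finset.sum_eq_zero h
    omega
  have hsq : 1 ≤ f j * f j := by
    have : f j ≤ -1 ∨ 1 ≤ f j := by omega
    rcases this with h | h <;> nlinarith
  have hzero := sum_sq_key T f j hj (by omega)
  have hs : ∑ k ∈ T, f k = f j := Finset.sum_eq_single_of_mem j hj hzero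
  exact ⟨j, hj, by omega, hzero⟩

private lemma sq_sum_two (T : Finset ℕ) (f : ℕ → ℤ)
    (h1 : ∑ j ∈ T, f j = 0) (h2 : ∑ j ∈ T, f j * f j = 2) :
    ∃ j ∈ T, ∃ r ∈ T, j ≠ r ∧ f j = 1 ∧ f r = -1 ∧
      ∀ k ∈ T, k ≠ j → k ≠ r → f k = 0 := by
  obtain ⟨j, hj, hfj⟩ : ∃ j ∈ T, f j ≠ 0 := by
    by_contra h
    push_neg at h
    have : ∑ j ∈ T, f j * f j = 0 := Finset.sum_eq_zero (fun k hk => by rw [h k hk]; ring)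
    omega
  have hsq : 1 ≤ f j * f j := by
    have : f j ≤ -1 ∨ 1 ≤ f j := by omega
    rcases this with h | h <;> nlinarith
  have hone : f j * f j = 1 := by
    by_contra hne
    have h2' : 2 ≤ f j * f j := Int.lt_iff_add_one_le.mp (lt_of_le_of_ne hsq (Ne.symm hne))
    have hzero := sum_sq_key T f j hj (by linarith)
    have hs : ∑ k ∈ T, f k = f j := Finset.sum_eq_single_of_mem j hj hzero
    rw [h1] at hs
    exact hfj hs.symm
  have hrest2 : ∑ k ∈ T.erase j, f k * f k = 1 := by
    have := Finset.sum_erase_eq_sub (f := fun k => f k * f k) hj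
    linarith
  have hrest1 : ∑ k ∈ T.erase j, f k = - f j := by
    have := Finset.sum_erase_eq_sub (f := f) hj
    omega
  have hj1 : f j = 1 ∨ f j = -1 := by
    rcases le_or_gt (f j) (-1) with h | h
    · right; nlinarith
    · left
      have : 1 ≤ f j := by omega
      nlinarith
  rcases hj1 with hj1 | hj1
  · obtain ⟨r, hr, hfr, hz⟩ := sq_sum_one (T.erase j) f (by omega) hrest2
    obtain ⟨hrj, hrT⟩ := Finset.mem_erase.mp hr
    refine ⟨j, hj, r, hrT, (Ne.symm hrj), hj1, hfr, ?_⟩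
    intro k hk hkj hkr
    exact hz k (Finset.mem_erase.mpr ⟨hkj, hk⟩) hkr
  · obtain ⟨r, hr, hfr, hz⟩ := sq_sum_one (T.erase j) (fun k => - f k)
      (by rw [Finset.sum_neg_distrib]; omega)
      (by simpa [neg_mul_neg] using hrest2)
    obtain ⟨hrj, hrT⟩ := Finset.mem_erase.mp hr
    refine ⟨r, hrT, j, hj, hrj, by omega, hj1, ?_⟩
    intro k hk hkr hkj
    have := hz k (Finset.mem_erase.mpr ⟨hkj, hk⟩) hkr
    omega

private lemma Ev_apply' (n a : ℕ) (ha : a ≤ n) (k : Fin (n+1)) :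
    Ev n a k = if (k : ℕ) = a then 1 else 0 := by
  have hcond : (k = (a : Fin (n+1))) ↔ ((k : ℕ) = a) := by
    rw [Fin.ext_iff, Fin.val_natCast, Nat.mod_eq_of_lt (by omega)]
  rw [Ev, Pi.single_apply]
  simp [hcond]

private lemma Hv_apply' (n : ℕ) (k : Fin (n+1)) :
    Hv n k = if (k : ℕ) = 0 then 1 else 0 := by
  rw [Hv, Pi.single_apply]
  simp only [Fin.ext_iff, Fin.val_zero]

private lemma D2_apply (n m : ℕ) (hn : 3 ≤ n) (hm : m ≤ n) :
    D₂ n ((m : ℕ) : Fin (n+1)) =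
      if m = 0 then 3 else if m = 1 then -2 else if m = n then -1 else 0 := by
  have hval : (((m : ℕ) : Fin (n+1)) : ℕ) = m := by
    rw [Fin.val_natCast]; exact Nat.mod_eq_of_lt (by omega)
  simp only [D₂, Pi.sub_apply, Pi.smul_apply, smul_eq_mul,
    Hv_apply' n, Ev_apply' n 1 (by omega), Ev_apply' n n le_rfl, hval]
  split_ifs <;> simp <;> omega

private lemma case_lemma (A u : ℤ)
    (k1 : 8*(A*A) + 12*(A*u) + 5*(u*u) + u ≤ 2)
    (k2 : 8*(A*A) + 12*(A*u) + 5*(u*u) - u ≤ 2) :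
    (A = 0 ∧ u = 0) ∨ (A = 1 ∧ u = -1) ∨ (A = -1 ∧ u = 1) := by
  have hA1 : A ≤ 2 := by nlinarith [sq_nonneg (6*A+5*u), sq_nonneg (A-2)]
  have hA2 : -2 ≤ A := by nlinarith [sq_nonneg (6*A+5*u), sq_nonneg (A+2)]
  have hu1 : u ≤ 2 := by nlinarith [sq_nonneg (4*A+3*u), sq_nonneg (u-2)]
  have hu2 : -2 ≤ u := by nlinarith [sq_nonneg (4*A+3*u), sq_nonneg (u+2)]
  interval_cases A <;> interval_cases u <;> omega

/-- Classification of the classes of square `-2` with `c₁ = 0` orthogonal to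
`D₂ = 3H - 2E₁ - Eₙ`: they are the ternary classes `±(H - E₁ - E_j - Eₙ)` with
`2 ≤ j ≤ n-1`, or the binary classes `E_j - E_r` with `2 ≤ j, r ≤ n-1`, `j ≠ r`. -/
theorem minus_two_classes (n : ℕ) (hn : 3 ≤ n) (S : Fin (n + 1) → ℤ)
    (hSS : Qf n S S = -2) (hSD : Qf n S (D₂ n) = 0) (hc : c₁ n S = 0) :
    (∃ j : ℕ, 2 ≤ j ∧ j ≤ n - 1 ∧ ∃ ε : ℤ, (ε = 1 ∨ ε = -1) ∧
        S = ε • (Hv n - Ev n 1 - Ev n j - Ev n n)) ∨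
    (∃ j r : ℕ, 2 ≤ j ∧ j ≤ n - 1 ∧ 2 ≤ r ∧ r ≤ n - 1 ∧ j ≠ r ∧
        S = Ev n j - Ev n r) := by
  have hkn : ∀ k : Fin (n+1), (k : ℕ) ≤ n := fun k => Nat.lt_succ_iff.mp k.isLt
  have hselfcast : ∀ k : Fin (n+1), (((k : ℕ) : ℕ) : Fin (n+1)) = k :=
    fun k => Fin.cast_val_eq_self k
  -- split the index set
  have hsplit : Finset.Icc 1 n = insert 1 (insert n (Finset.Icc 2 (n-1))) := by
    ext m; simp only [Finset.mem_Icc, Finset.mem_insert]; omega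
  have h1notin : (1:ℕ) ∉ insert n (Finset.Icc 2 (n-1)) := by
    simp only [Finset.mem_insert, Finset.mem_Icc]; omega
  have hnnotin : n ∉ Finset.Icc 2 (n-1) := by
    simp only [Finset.mem_Icc]; omega
  have hsum : ∀ h : ℕ → ℤ, ∑ j ∈ Finset.Icc 1 n, h j
      = h 1 + h n + ∑ j ∈ Finset.Icc 2 (n-1), h j := by
    intro h
    rw [hsplit, Finset.sum_insert h1notin, Finset.sum_insert hnnotin]; ring
  -- equation 1 (self-intersection)
  simp only [Qf] at hSS
  rw [hsum (fun j => S ((j:ℕ) : Fin (n+1)) * S ((j:ℕ) : Fin (n+1)))] at hSS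
  -- equation 3 (chern class)
  simp only [c₁] at hc
  rw [hsum (fun j => S ((j:ℕ) : Fin (n+1)))] at hc
  -- equation 2 (orthogonality with D₂)
  have hD0 : D₂ n (0 : Fin (n+1)) = 3 := by
    have := D2_apply n 0 hn (by omega)
    rw [if_pos rfl] at this
    simpa using this
  have hD1 : D₂ n ((1:ℕ) : Fin (n+1)) = -2 := by
    rw [D2_apply n 1 hn (by omega), if_neg (by omega), if_pos rfl]
  have hDn : D₂ n ((n:ℕ) : Fin (n+1)) = -1 := by
    rw [D2_apply n n hn le_rfl, if_neg (by omega), if_neg (by omega), if_pos rfl]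
  have hDT : ∀ j ∈ Finset.Icc 2 (n-1), D₂ n ((j:ℕ) : Fin (n+1)) = 0 := by
    intro j hj
    obtain ⟨hj2, hjn⟩ := Finset.mem_Icc.mp hj
    rw [D2_apply n j hn (by omega), if_neg (by omega), if_neg (by omega), if_neg (by omega)]
  simp only [Qf] at hSD
  rw [hsum (fun j => S ((j:ℕ) : Fin (n+1)) * D₂ n ((j:ℕ) : Fin (n+1)))] at hSD
  rw [hD0, hD1, hDn,
    Finset.sum_eq_zero (fun j hj => by rw [hDT j hj, mul_zero])] at hSD
  -- generalize the unknowns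
  obtain ⟨A, hA⟩ : ∃ x, S 0 = x := ⟨_, rfl⟩
  obtain ⟨u, hu⟩ : ∃ x, S ((1:ℕ) : Fin (n+1)) = x := ⟨_, rfl⟩
  obtain ⟨v, hv⟩ : ∃ x, S ((n:ℕ) : Fin (n+1)) = x := ⟨_, rfl⟩
  obtain ⟨M, hM⟩ : ∃ x, ∑ j ∈ Finset.Icc 2 (n-1), S ((j:ℕ) : Fin (n+1)) = x := ⟨_, rfl⟩
  obtain ⟨Qs, hQs⟩ : ∃ x,
      ∑ j ∈ Finset.Icc 2 (n-1), S ((j:ℕ) : Fin (n+1)) * S ((j:ℕ) : Fin (n+1)) = x := ⟨_, rfl⟩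
  rw [hA, hu, hv, hQs] at hSS
  rw [hA, hu, hv, hM] at hc
  rw [hA, hu, hv] at hSD
  -- derived facts
  have e2 : 3 * A + 2 * u + v = 0 := by linarith
  have hMu : M = u := by linarith
  have habs : |M| ≤ Qs := by
    rw [← hM, ← hQs]
    exact le_trans (Finset.abs_sum_le_sum_abs _ _)
      (Finset.sum_le_sum (fun j _ => abs_le_sq' _))
  have hQu1 : u ≤ Qs := le_trans (by rw [← hMu]; exact le_abs_self M) habs
  have hQu2 : -u ≤ Qs := le_trans (by rw [← hMu]; exact neg_le_abs M) habs
  have hvv : v * v = 9*(A*A) + 12*(A*u) + 4*(u*u) := by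
    have hv' : v = -3*A - 2*u := by linarith
    rw [hv']; ring
  have hQval : Qs = 2 - 8*(A*A) - 12*(A*u) - 5*(u*u) := by linarith
  rcases case_lemma A u (by linarith) (by linarith) with ⟨hA0, hu0⟩ | ⟨hA0, hu0⟩ | ⟨hA0, hu0⟩
  · -- binary case : A = 0, u = 0
    right
    have hv0 : v = 0 := by linarith
    have hM0 : M = 0 := by omega
    have hQ2 : Qs = 2 := by rw [hQval, hA0, hu0]; ring
    obtain ⟨j, hjT, r, hrT, hjr, hfj, hfr, hz⟩ :=
      sq_sum_two (Finset.Icc 2 (n-1)) (fun j => S ((j:ℕ) : Fin (n+1)))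
        (hM.trans hM0) (hQs.trans hQ2)
    obtain ⟨hj2, hjn⟩ := Finset.mem_Icc.mp hjT
    obtain ⟨hr2, hrn⟩ := Finset.mem_Icc.mp hrT
    refine ⟨j, r, hj2, hjn, hr2, hrn, hjr, ?_⟩
    funext k
    conv_lhs => rw [← hselfcast k]
    rw [Pi.sub_apply, Ev_apply' n j (by omega) _, Ev_apply' n r (by omega) _]
    have hmle := hkn k
    rcases (by omega : (k:ℕ) = j ∨ (k:ℕ) = r ∨ ((k:ℕ) ≠ j ∧ (k:ℕ) ≠ r))
        with hm | hm | ⟨hm1, hm2⟩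
    · rw [hm, if_pos rfl, if_neg (by omega)]; omega
    · rw [hm, if_neg (by omega), if_pos rfl]; omega
    · rw [if_neg hm1, if_neg hm2]
      rcases (by omega : (k:ℕ) = 0 ∨ (k:ℕ) = 1 ∨ (k:ℕ) = n ∨
          (2 ≤ (k:ℕ) ∧ (k:ℕ) ≤ n-1)) with hm | hm | hm | hm
      · rw [hm]; simp only [Nat.cast_zero]; omega
      · rw [hm]; omega
      · rw [hm]; omega
      · have := hz (k:ℕ) (Finset.mem_Icc.mpr hm) hm1 hm2
        omega
  · -- ternary case with ε = 1 : A = 1, u = -1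
    left
    have hv0 : v = -1 := by linarith
    have hM0 : M = -1 := by omega
    have hQ1 : Qs = 1 := by rw [hQval, hA0, hu0]; ring
    obtain ⟨j, hjT, hfj, hz⟩ :=
      sq_sum_one (Finset.Icc 2 (n-1)) (fun j => S ((j:ℕ) : Fin (n+1)))
        (hM.trans hM0) (hQs.trans hQ1)
    obtain ⟨hj2, hjn⟩ := Finset.mem_Icc.mp hjT
    refine ⟨j, hj2, hjn, 1, Or.inl rfl, ?_⟩
    funext k
    rw [one_smul]
    conv_lhs => rw [← hselfcast k]
    rw [Pi.sub_apply, Pi.sub_apply, Pi.sub_apply,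
      Hv_apply' n, Ev_apply' n 1 (by omega), Ev_apply' n j (by omega), Ev_apply' n n le_rfl]
    have hmle := hkn k
    rcases (by omega : (k:ℕ) = 0 ∨ (k:ℕ) = 1 ∨ (k:ℕ) = j ∨ (k:ℕ) = n ∨
        (2 ≤ (k:ℕ) ∧ (k:ℕ) ≤ n-1 ∧ (k:ℕ) ≠ j)) with hm | hm | hm | hm | ⟨hm1, hm2, hm3⟩
    · rw [hm, if_pos rfl, if_neg (by omega), if_neg (by omega), if_neg (by omega)]
      simp only [Nat.cast_zero]; omega
    · rw [hm, if_neg (by omega), if_pos rfl, if_neg (by omega), if_neg (by omega)]; omega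
    · rw [hm, if_neg (by omega), if_neg (by omega), if_pos rfl, if_neg (by omega)]; omega
    · rw [hm, if_neg (by omega), if_neg (by omega), if_neg (by omega), if_pos rfl]; omega
    · rw [if_neg (by omega), if_neg (by omega), if_neg (by omega), if_neg (by omega)]
      have := hz (k:ℕ) (Finset.mem_Icc.mpr ⟨hm1, hm2⟩) hm3
      omega
  · -- ternary case with ε = -1 : A = -1, u = 1
    left
    have hv0 : v = 1 := by linarith
    have hM0 : M = 1 := by omega
    have hQ1 : Qs = 1 := by rw [hQval, hA0, hu0]; ring
    obtain ⟨j, hjT, hfj, hz⟩ :=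
      sq_sum_one (Finset.Icc 2 (n-1)) (fun j => - S ((j:ℕ) : Fin (n+1)))
        (by rw [Finset.sum_neg_distrib, hM, hM0])
        (by simp only [neg_mul_neg]; rw [hQs, hQ1])
    obtain ⟨hj2, hjn⟩ := Finset.mem_Icc.mp hjT
    refine ⟨j, hj2, hjn, -1, Or.inr rfl, ?_⟩
    funext k
    have hrhs : ((-1 : ℤ) • (Hv n - Ev n 1 - Ev n j - Ev n n)) k
        = -((Hv n - Ev n 1 - Ev n j - Ev n n) k) := by
      simp
    rw [hrhs]
    conv_lhs => rw [← hselfcast k]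
    rw [Pi.sub_apply, Pi.sub_apply, Pi.sub_apply,
      Hv_apply' n, Ev_apply' n 1 (by omega), Ev_apply' n j (by omega), Ev_apply' n n le_rfl]
    have hmle := hkn k
    rcases (by omega : (k:ℕ) = 0 ∨ (k:ℕ) = 1 ∨ (k:ℕ) = j ∨ (k:ℕ) = n ∨
        (2 ≤ (k:ℕ) ∧ (k:ℕ) ≤ n-1 ∧ (k:ℕ) ≠ j)) with hm | hm | hm | hm | ⟨hm1, hm2, hm3⟩
    · rw [hm, if_pos rfl, if_neg (by omega), if_neg (by omega), if_neg (by omega)]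
      simp only [Nat.cast_zero]; omega
    · rw [hm, if_neg (by omega), if_pos rfl, if_neg (by omega), if_neg (by omega)]; omega
    · rw [hm, if_neg (by omega), if_neg (by omega), if_pos rfl, if_neg (by omega)]
      have := hfj
      omega
    · rw [hm, if_neg (by omega), if_neg (by omega), if_neg (by omega), if_pos rfl]; omega
    · rw [if_neg (by omega), if_neg (by omega), if_neg (by omega), if_neg (by omega)]
      have := hz (k:ℕ) (Finset.mem_Icc.mpr ⟨hm1, hm2⟩) hm3
      omega
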